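/- Let y, p_1,…,p_k ∈ ℝ^d with y ≠ p_i for all i, and suppose the points y, p_1,…,p_k do not all lie on a single line. With v_i = (p_i − y)/‖p_i − y‖ and P(v) = I_d − v vᵀ, the matrix M = ∑_{i=1}^k (1/‖p_i − y‖) P(v_i) is symmetric positive definite. (M is the Hessian of the sum-of-distances function ϑ(y) = ∑_i ‖y − p_i‖ at y.) -/

import Mathlib

open Finset

open Matrix in
private lemma aux_dot_sum_mulVec {n m : Type*} [Fintype n] [Fintype m] (x : n → ℝ)
    (s : Finset m) (f : m → Matrix n n ℝ) :
    dotProduct x ((∑ i ∈ s, f i) *ᵥ x) = ∑ i ∈ s, dotProduct x (f i *ᵥ x) := by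
  induction s using Finset.cons_induction with
  | empty => simp
  | cons a s ha ih =>
      rw [Finset.sum_cons, Finset.sum_cons, Matrix.add_mulVec, dotProduct_add, ih]

open Matrix RealInnerProductSpace in
theorem stmt_15 {d k : ℕ}
    (y : EuclideanSpace ℝ (Fin d)) (p : Fin k → EuclideanSpace ℝ (Fin d))
    (hyp : ∀ i, y ≠ p i)
    (hline : ¬ Collinear ℝ (insert y (Set.range p)))
    (v : Fin k → EuclideanSpace ℝ (Fin d))
    (hv : ∀ i, v i = ‖p i - y‖⁻¹ • (p i - y))
    (M : Matrix (Fin d) (Fin d) ℝ)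
    (hM : M = ∑ i, ‖p i - y‖⁻¹ •
        Matrix.of (fun a b : Fin d => (if a = b then (1 : ℝ) else 0) - v i a * v i b)) :
    M.PosDef := by
  rw [Matrix.posDef_iff_dotProduct_mulVec]
  have hpy : ∀ i, p i - y ≠ 0 := fun i => sub_ne_zero.2 (Ne.symm (hyp i))
  have hnorm : ∀ i, (0:ℝ) < ‖p i - y‖ := fun i => norm_pos_iff.2 (hpy i)
  have hvnorm : ∀ i, ‖v i‖ = 1 := by
    intro i
    rw [hv i, norm_smul, norm_inv, norm_norm, inv_mul_cancel₀ (hnorm i).ne']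
  constructor
  · apply Matrix.IsHermitian.ext
    intro a b
    rw [hM]
    simp only [Matrix.sum_apply, Matrix.smul_apply, Matrix.of_apply, star_trivial,
      smul_eq_mul]
    apply Finset.sum_congr rfl
    intro i _
    rcases eq_or_ne a b with rfl | h
    · ring
    · simp only [if_neg h, if_neg (Ne.symm h)]
      ring
  · intro x hx
    set x' : EuclideanSpace ℝ (Fin d) := WithLp.toLp 2 x with hx'
    have hx'0 : x' ≠ 0 := by simpa [hx'] using hx
    have key : ∀ i : Fin k, dotProduct x
        ((Matrix.of fun a b : Fin d => (if a = b then (1:ℝ) else 0) - v i a * v i b) *ᵥ x)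
        = ⟪x', x'⟫ - ⟪v i, x'⟫ ^ 2 := by
      intro i
      have hinner : ⟪v i, x'⟫ = ∑ b, v i b * x b := by
        simp [PiLp.inner_apply, hx']
        exact Finset.sum_congr rfl fun _ _ => mul_comm _ _
      have hinner2 : ⟪x', x'⟫ = ∑ b, x b * x b := by
        rw [hx', PiLp.inner_apply]
        simp [sq]
      simp only [dotProduct, Matrix.mulVec, Matrix.of_apply, hinner, hinner2]
      rw [sq, Finset.sum_mul, ← Finset.sum_sub_distrib]
      apply Finset.sum_congr rfl
      intro a _
      rw [Finset.mul_sum]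
      have hrow : ∀ b : Fin d, x a * (((if a = b then (1:ℝ) else 0) - v i a * v i b) * x b)
          = (if a = b then x a * x a else 0) - (x a * v i a) * (v i b * x b) := by
        intro b
        rcases eq_or_ne a b with rfl | h
        · rw [if_pos rfl, if_pos rfl]; ring
        · rw [if_neg h, if_neg h]; ring
      rw [Finset.sum_congr rfl fun b _ => hrow b, Finset.sum_sub_distrib,
        Finset.sum_ite_eq, ← Finset.mul_sum]
      simp only [Finset.mem_univ, if_true]
      ring
    have hcs : ∀ i : Fin k, ⟪v i, x'⟫ ^ 2 ≤ ⟪x', x'⟫ := by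
      intro i
      have h1 := real_inner_mul_inner_self_le (v i) x'
      rw [real_inner_self_eq_norm_sq, real_inner_self_eq_norm_sq, hvnorm i] at h1
      rw [real_inner_self_eq_norm_sq]
      calc ⟪v i, x'⟫ ^ 2 = ⟪v i, x'⟫ * ⟪v i, x'⟫ := sq ⟪v i, x'⟫
        _ ≤ 1 ^ 2 * ‖x'‖ ^ 2 := h1
        _ = ‖x'‖ ^ 2 := by ring
    have hstrict : ∃ i : Fin k, ⟪v i, x'⟫ ^ 2 < ⟪x', x'⟫ := by
      by_contra hcon
      push_neg at hcon
      apply hline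
      rw [collinear_iff_of_mem (Set.mem_insert y _)]
      refine ⟨x', ?_⟩
      rintro q (rfl | ⟨i, rfl⟩)
      · exact ⟨0, by simp⟩
      · have heq : ⟪v i, x'⟫ ^ 2 = ⟪x', x'⟫ := le_antisymm (hcs i) (hcon i)
        have hxn : ‖x'‖ ≠ 0 := norm_ne_zero_iff.2 hx'0
        have hsq : ⟪v i, x'⟫ ^ 2 = ‖x'‖ ^ 2 := by
          rw [heq, real_inner_self_eq_norm_sq]
        have hdep : ∃ c : ℝ, v i = c • x' := by
          rcases sq_eq_sq_iff_eq_or_eq_neg.1 hsq with h | h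
          · have h3 := inner_eq_norm_mul_iff_real.1 (by rw [h, hvnorm i, one_mul])
            rw [hvnorm i, one_smul] at h3
            refine ⟨‖x'‖⁻¹, ?_⟩
            calc v i = ‖x'‖⁻¹ • (‖x'‖ • v i) := (inv_smul_smul₀ hxn (v i)).symm
              _ = ‖x'‖⁻¹ • x' := by rw [h3]
          · have h2 : ⟪v i, -x'⟫ = ‖v i‖ * ‖-x'‖ := by
              rw [inner_neg_right, h, hvnorm i, norm_neg, one_mul, neg_neg]
            have h3 := inner_eq_norm_mul_iff_real.1 h2
            rw [hvnorm i, one_smul, norm_neg] at h3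
            refine ⟨-‖x'‖⁻¹, ?_⟩
            calc v i = ‖x'‖⁻¹ • (‖x'‖ • v i) := (inv_smul_smul₀ hxn (v i)).symm
              _ = ‖x'‖⁻¹ • (-x') := by rw [h3]
              _ = (-‖x'‖⁻¹) • x' := by rw [smul_neg, neg_smul]
        obtain ⟨c, hc⟩ := hdep
        refine ⟨‖p i - y‖ * c, ?_⟩
        have hpi : p i - y = ‖p i - y‖ • v i := by
          rw [hv i, smul_smul, mul_inv_cancel₀ (hnorm i).ne', one_smul]
        rw [vadd_eq_add]
        refine eq_add_of_sub_eq ?_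
        conv_lhs => rw [hpi]
        rw [hc, smul_smul]
    obtain ⟨j, hj⟩ := hstrict
    rw [hM, star_trivial]
    have hdist : dotProduct x ((∑ i, ‖p i - y‖⁻¹ •
        Matrix.of (fun a b : Fin d => (if a = b then (1 : ℝ) else 0) - v i a * v i b)) *ᵥ x)
        = ∑ i, dotProduct x ((‖p i - y‖⁻¹ •
        Matrix.of (fun a b : Fin d => (if a = b then (1 : ℝ) else 0) - v i a * v i b)) *ᵥ x) := by
      exact aux_dot_sum_mulVec x Finset.univ _
    rw [hdist]
    apply Finset.sum_pos'
    · intro i _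
      rw [Matrix.smul_mulVec, dotProduct_smul, smul_eq_mul, key i]
      exact mul_nonneg (inv_nonneg.2 (hnorm i).le) (sub_nonneg.2 (hcs i))
    · refine ⟨j, Finset.mem_univ j, ?_⟩
      rw [Matrix.smul_mulVec, dotProduct_smul, smul_eq_mul, key j]
      exact mul_pos (inv_pos.2 (hnorm j)) (sub_pos.2 hj)
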